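/- Let |α| < 1, δ ∈ [0, π/2), and let (a_n) be a complex sequence with ∑_{n≥0} |a_n| e^{-δ n} < ∞. Define f(x) = ∑_{n≥0} a_n Re K_{α+in}(x) for x > 0. Then ∫_0^∞ e^{-x} |f(x)| dx ≤ (∑_{n≥0} |a_n| e^{-δ n}) ∫_0^∞ e^{-x} K_α(x cos δ) dx < ∞. -/

import Mathlib

open MeasureTheory

/-- `Re K_{α+iτ}(x) = ∫_0^∞ e^{-x cosh u} cosh(α u) cos(τ u) du`. -/
noncomputable def ReK (α τ x : ℝ) : ℝ :=
  ∫ u in Set.Ioi (0:ℝ), Real.exp (-(x * Real.cosh u)) * Real.cosh (α * u) * Real.cos (τ * u)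

/-- `K_α(y) = ∫_0^∞ e^{-y cosh u} cosh(α u) du`. -/
noncomputable def Kreal (α y : ℝ) : ℝ :=
  ∫ u in Set.Ioi (0:ℝ), Real.exp (-(y * Real.cosh u)) * Real.cosh (α * u)

open Set Filter Asymptotics


noncomputable def gg (α τ x : ℝ) (z : ℂ) : ℂ :=
  Complex.exp (-(x:ℂ) * Complex.cosh z) * Complex.cosh ((α:ℂ) * z) *
    Complex.exp ((τ:ℂ) * z * Complex.I)

lemma gg_entire (α τ x : ℝ) : Differentiable ℂ (gg α τ x) := by
  unfold gg; fun_prop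

lemma gg_continuous (α τ x : ℝ) : Continuous (gg α τ x) := (gg_entire α τ x).continuous

lemma cosh_decomp (u t : ℝ) :
    Complex.cosh ((u:ℂ) + (t:ℂ) * Complex.I) =
      (Real.cosh u * Real.cos t : ℝ) + ((Real.sinh u * Real.sin t : ℝ)) * Complex.I := by
  rw [Complex.cosh_add, Complex.cosh_mul_I, Complex.sinh_mul_I, ← Complex.ofReal_cosh,
    ← Complex.ofReal_sinh, ← Complex.ofReal_cos, ← Complex.ofReal_sin]
  push_cast; ring

lemma norm_cosh_le (u t : ℝ) :
    ‖Complex.cosh ((u:ℂ) + (t:ℂ) * Complex.I)‖ ≤ Real.cosh u := by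
  have h1 : Real.sin t ^ 2 + Real.cos t ^ 2 = 1 := Real.sin_sq_add_cos_sq t
  have h2 : Real.sinh u ^ 2 = Real.cosh u ^ 2 - 1 := Real.sinh_sq u
  have h3 : (1:ℝ) ≤ Real.cosh u := Real.one_le_cosh u
  rw [cosh_decomp, Complex.norm_add_mul_I]
  calc Real.sqrt ((Real.cosh u * Real.cos t) ^ 2 + (Real.sinh u * Real.sin t) ^ 2)
      ≤ Real.sqrt (Real.cosh u ^ 2) := Real.sqrt_le_sqrt (by nlinarith)
    _ = Real.cosh u := Real.sqrt_sq (by linarith)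

lemma norm_gg_le (α τ x u t : ℝ) (hτ : 0 ≤ τ) (ht : 0 ≤ t) :
    ‖gg α τ x ((u:ℂ) + (t:ℂ) * Complex.I)‖ ≤
      Real.exp (-(x * Real.cos t * Real.cosh u)) * Real.cosh (α * u) * Real.exp (-(τ * t)) := by
  unfold gg
  rw [norm_mul, norm_mul]
  have e1 : ‖Complex.exp (-(x:ℂ) * Complex.cosh ((u:ℂ) + (t:ℂ) * Complex.I))‖ =
      Real.exp (-(x * Real.cos t * Real.cosh u)) := by
    rw [Complex.norm_exp]
    congr 1
    rw [cosh_decomp]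
    simp [Complex.mul_re, Complex.cos_ofReal_re, Complex.sin_ofReal_im, Complex.cos_ofReal_im,
      Complex.sin_ofReal_re]
    ring
  have e2 : ‖Complex.cosh ((α:ℂ) * ((u:ℂ) + (t:ℂ) * Complex.I))‖ ≤ Real.cosh (α * u) := by
    have : (α:ℂ) * ((u:ℂ) + (t:ℂ) * Complex.I) = ((α*u : ℝ):ℂ) + ((α*t:ℝ):ℂ) * Complex.I := by
      push_cast; ring
    rw [this]
    exact norm_cosh_le _ _
  have e3 : ‖Complex.exp ((τ:ℂ) * ((u:ℂ) + (t:ℂ) * Complex.I) * Complex.I)‖ =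
      Real.exp (-(τ * t)) := by
    rw [Complex.norm_exp]
    congr 1
    simp [Complex.mul_re, Complex.mul_im]
    try ring
  rw [e1, e3]
  have := mul_le_mul_of_nonneg_left e2 (le_of_lt (Real.exp_pos (-(x * Real.cos t * Real.cosh u))))
  have h4 : (0:ℝ) < Real.exp (-(τ*t)) := Real.exp_pos _
  nlinarith [Real.exp_pos (-(x * Real.cos t * Real.cosh u)), norm_nonneg (Complex.cosh ((α:ℂ) * ((u:ℂ) + (t:ℂ) * Complex.I)))]

lemma cosh_le_exp_abs (v : ℝ) : Real.cosh v ≤ Real.exp |v| := by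
  rw [Real.cosh_eq]
  have h1 : Real.exp v ≤ Real.exp |v| := Real.exp_le_exp.2 (le_abs_self v)
  have h2 : Real.exp (-v) ≤ Real.exp |v| := Real.exp_le_exp.2 (neg_le_abs v)
  linarith

lemma decay (α : ℝ) {y : ℝ} (hy : 0 < y) :
    ∀ᶠ u in atTop, Real.exp (-(y * Real.cosh u)) * Real.cosh (α * u) ≤ Real.exp (-u) := by
  have h := (Real.tendsto_exp_div_pow_atTop 1).eventually_ge_atTop (2 * (|α| + 1) / y)
  filter_upwards [h, eventually_ge_atTop (0:ℝ)] with u hu hu0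
  have hcosh : Real.exp u / 2 ≤ Real.cosh u := by
    rw [Real.cosh_eq]; have := Real.exp_pos (-u); linarith
  simp only [pow_one, ge_iff_le] at hu
  have hexp : 2 * (|α| + 1) / y * u ≤ Real.exp u := by
    rcases eq_or_lt_of_le hu0 with h0 | h0
    · simp [← h0]
    · have := mul_le_mul_of_nonneg_right hu hu0
      rwa [div_mul_cancel₀ _ (ne_of_gt h0)] at this
  have hy2 : (|α| + 1) * u ≤ y * Real.cosh u := by
    have h5 : y * (2 * (|α| + 1) / y * u) ≤ y * Real.exp u :=
      mul_le_mul_of_nonneg_left hexp hy.le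
    rw [show y * (2 * (|α| + 1) / y * u) = 2 * ((|α| + 1) * u) by field_simp] at h5
    nlinarith
  have hc : Real.cosh (α * u) ≤ Real.exp (|α| * u) := by
    calc Real.cosh (α * u) ≤ Real.exp |α * u| := cosh_le_exp_abs _
      _ = Real.exp (|α| * u) := by rw [abs_mul, abs_of_nonneg hu0]
  calc Real.exp (-(y * Real.cosh u)) * Real.cosh (α * u)
      ≤ Real.exp (-(y * Real.cosh u)) * Real.exp (|α| * u) :=
        mul_le_mul_of_nonneg_left hc (Real.exp_pos _).le
    _ = Real.exp (-(y * Real.cosh u) + |α| * u) := (Real.exp_add _ _).symm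
    _ ≤ Real.exp (-u) := Real.exp_le_exp.2 (by linarith)

lemma Kint (α : ℝ) {y : ℝ} (hy : 0 < y) :
    IntegrableOn (fun u => Real.exp (-(y * Real.cosh u)) * Real.cosh (α * u)) (Ioi 0) := by
  apply integrable_of_isBigO_exp_neg (one_pos)
  · fun_prop
  · rw [isBigO_iff]
    refine ⟨1, ?_⟩
    filter_upwards [decay α hy] with u hu
    simp only [norm_mul, one_mul, Real.norm_eq_abs, Real.abs_exp,
      abs_of_nonneg (Real.cosh_pos _).le]
    calc Real.exp (-(y * Real.cosh u)) * Real.cosh (α * u) ≤ Real.exp (-u) := hu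
      _ = Real.exp (-1 * u) := by norm_num
section
variable {α τ x δ : ℝ}

lemma cos_pos_of (hδ0 : 0 ≤ δ) (hδ2 : δ < Real.pi / 2) : 0 < Real.cos δ :=
  Real.cos_pos_of_mem_Ioo ⟨by linarith [Real.pi_pos], hδ2⟩

lemma gg_int (hx : 0 < x) (hτ : 0 ≤ τ) (hδ0 : 0 ≤ δ) (hδ2 : δ < Real.pi / 2)
    {t : ℝ} (ht : t ∈ Icc 0 δ) :
    IntegrableOn (fun u : ℝ => gg α τ x ((u:ℂ) + (t:ℂ) * Complex.I)) (Ioi 0) := by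
  have hc : 0 < x * Real.cos δ := mul_pos hx (cos_pos_of hδ0 hδ2)
  apply Integrable.mono' ((Kint α hc))
  · exact ((gg_continuous α τ x).comp (by continuity)).aestronglyMeasurable
  · filter_upwards with u
    refine le_trans (norm_gg_le α τ x u t hτ ht.1) ?_
    have h1 : Real.cos δ ≤ Real.cos t :=
      Real.cos_le_cos_of_nonneg_of_le_pi ht.1 (by linarith [Real.pi_pos]) ht.2
    have h2 : Real.exp (-(τ * t)) ≤ 1 := Real.exp_le_one_iff.2 (by nlinarith [ht.1])
    have h3 : Real.exp (-(x * Real.cos t * Real.cosh u)) ≤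
        Real.exp (-(x * Real.cos δ * Real.cosh u)) := by
      apply Real.exp_le_exp.2
      have hcu := Real.cosh_pos (x := u)
      have := mul_le_mul_of_nonneg_left h1 (mul_pos hx hcu).le
      nlinarith
    have h4 := (Real.cosh_pos (x := α * u)).le
    have e1 := Real.exp_pos (-(x * Real.cos t * Real.cosh u))
    have e2 := Real.exp_pos (-(x * Real.cos δ * Real.cosh u))
    have e3 := Real.exp_pos (-(τ * t))
    calc Real.exp (-(x * Real.cos t * Real.cosh u)) * Real.cosh (α * u) * Real.exp (-(τ * t))
        ≤ Real.exp (-(x * Real.cos t * Real.cosh u)) * Real.cosh (α * u) * 1 :=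
          mul_le_mul_of_nonneg_left h2 (by positivity)
      _ = Real.exp (-(x * Real.cos t * Real.cosh u)) * Real.cosh (α * u) := by ring
      _ ≤ Real.exp (-(x * Real.cos δ * Real.cosh u)) * Real.cosh (α * u) :=
            mul_le_mul_of_nonneg_right h3 h4

end
section
variable {α τ x δ : ℝ}

lemma norm_gg_le' (hx : 0 < x) (hτ : 0 ≤ τ) (hδ0 : 0 ≤ δ) (hδ2 : δ < Real.pi / 2)
    {t : ℝ} (ht : t ∈ Icc 0 δ) (u : ℝ) :
    ‖gg α τ x ((u:ℂ) + (t:ℂ) * Complex.I)‖ ≤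
      Real.exp (-(x * Real.cos δ * Real.cosh u)) * Real.cosh (α * u) := by
  refine le_trans (norm_gg_le α τ x u t hτ ht.1) ?_
  have h1 : Real.cos δ ≤ Real.cos t :=
    Real.cos_le_cos_of_nonneg_of_le_pi ht.1 (by linarith [Real.pi_pos]) ht.2
  have h2 : Real.exp (-(τ * t)) ≤ 1 := Real.exp_le_one_iff.2 (by nlinarith [ht.1])
  have h3 : Real.exp (-(x * Real.cos t * Real.cosh u)) ≤
      Real.exp (-(x * Real.cos δ * Real.cosh u)) := by
    apply Real.exp_le_exp.2
    have hcu := Real.cosh_pos (x := u)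
    have := mul_le_mul_of_nonneg_left h1 (mul_pos hx hcu).le
    nlinarith
  have h4 := (Real.cosh_pos (x := α * u)).le
  calc Real.exp (-(x * Real.cos t * Real.cosh u)) * Real.cosh (α * u) * Real.exp (-(τ * t))
      ≤ Real.exp (-(x * Real.cos t * Real.cosh u)) * Real.cosh (α * u) * 1 :=
        mul_le_mul_of_nonneg_left h2 (by positivity)
    _ = Real.exp (-(x * Real.cos t * Real.cosh u)) * Real.cosh (α * u) := by ring
    _ ≤ Real.exp (-(x * Real.cos δ * Real.cosh u)) * Real.cosh (α * u) :=
        mul_le_mul_of_nonneg_right h3 h4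

lemma gg_int' (hx : 0 < x) (hτ : 0 ≤ τ) (hδ0 : 0 ≤ δ) (hδ2 : δ < Real.pi / 2)
    {t : ℝ} (ht : t ∈ Icc 0 δ) :
    IntegrableOn (fun u : ℝ => gg α τ x ((u:ℂ) + (t:ℂ) * Complex.I)) (Ioi 0) := by
  have hc : 0 < x * Real.cos δ := mul_pos hx (cos_pos_of hδ0 hδ2)
  apply Integrable.mono' ((Kint α hc))
  · exact ((gg_continuous α τ x).comp (by continuity)).aestronglyMeasurable
  · filter_upwards with u
    exact norm_gg_le' hx hτ hδ0 hδ2 ht u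

lemma gg_int0 (hx : 0 < x) (hτ : 0 ≤ τ) (hδ0 : 0 ≤ δ) (hδ2 : δ < Real.pi / 2) :
    IntegrableOn (fun u : ℝ => gg α τ x ((u:ℂ))) (Ioi 0) := by
  have := gg_int' (α := α) hx hτ hδ0 hδ2 (t := 0) ⟨le_refl 0, hδ0⟩
  simpa using this

lemma contour (hx : 0 < x) (hτ : 0 ≤ τ) (hδ0 : 0 ≤ δ) (hδ2 : δ < Real.pi / 2) :
    ∫ u in Ioi (0:ℝ), gg α τ x ((u:ℂ) + (δ:ℂ) * Complex.I) =
      (∫ u in Ioi (0:ℝ), gg α τ x ((u:ℂ))) -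
        Complex.I • ∫ t in (0:ℝ)..δ, gg α τ x ((t:ℂ) * Complex.I) := by
  have key : ∀ R : ℝ, ∫ u in (0:ℝ)..R, gg α τ x ((u:ℂ) + (δ:ℂ) * Complex.I) =
      (∫ u in (0:ℝ)..R, gg α τ x ((u:ℂ))) +
        Complex.I • (∫ t in (0:ℝ)..δ, gg α τ x ((R:ℂ) + (t:ℂ) * Complex.I)) -
        Complex.I • ∫ t in (0:ℝ)..δ, gg α τ x ((t:ℂ) * Complex.I) := by
    intro R
    have h := Complex.integral_boundary_rect_eq_zero_of_differentiableOn (gg α τ x) 0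
      ((R:ℂ) + (δ:ℂ) * Complex.I) ((gg_entire α τ x).differentiableOn)
    simp only [Complex.zero_re, Complex.zero_im, Complex.add_re, Complex.ofReal_re,
      Complex.mul_re, Complex.ofReal_im, Complex.I_re, Complex.I_im, Complex.add_im,
      Complex.mul_im, mul_zero, mul_one, zero_mul, sub_zero, add_zero, zero_add,
      Complex.ofReal_zero, zero_sub, neg_zero] at h
    linear_combination (norm := abel) -h
  have hA : Tendsto (fun R => ∫ u in (0:ℝ)..R, gg α τ x ((u:ℂ))) atTop
      (nhds (∫ u in Ioi (0:ℝ), gg α τ x ((u:ℂ)))) :=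
    intervalIntegral_tendsto_integral_Ioi 0 (gg_int0 hx hτ hδ0 hδ2) tendsto_id
  have hB : Tendsto (fun R => ∫ u in (0:ℝ)..R, gg α τ x ((u:ℂ) + (δ:ℂ) * Complex.I)) atTop
      (nhds (∫ u in Ioi (0:ℝ), gg α τ x ((u:ℂ) + (δ:ℂ) * Complex.I))) :=
    intervalIntegral_tendsto_integral_Ioi 0
      (gg_int' hx hτ hδ0 hδ2 ⟨hδ0, le_refl δ⟩) tendsto_id
  have hV : Tendsto (fun R : ℝ =>
      Complex.I • (∫ t in (0:ℝ)..δ, gg α τ x ((R:ℂ) + (t:ℂ) * Complex.I))) atTop (nhds 0) := by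
    have hc : 0 < x * Real.cos δ := mul_pos hx (cos_pos_of hδ0 hδ2)
    apply squeeze_zero_norm' (a := fun R =>
      (Real.exp (-(x * Real.cos δ * Real.cosh R)) * Real.cosh (α * R)) * |δ - 0|)
    · filter_upwards with R
      rw [norm_smul, Complex.norm_I, one_mul]
      apply intervalIntegral.norm_integral_le_of_norm_le_const
      intro t ht'
      have ht : t ∈ Icc 0 δ := by
        rcases Set.uIoc_of_le hδ0 ▸ ht' with ⟨h1, h2⟩
        exact ⟨h1.le, h2⟩
      exact norm_gg_le' hx hτ hδ0 hδ2 ht R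
    · have h1 : Tendsto (fun R : ℝ => Real.exp (-R) * |δ - 0|) atTop (nhds 0) := by
        simpa using (Real.tendsto_exp_neg_atTop_nhds_zero).mul_const |δ - 0|
      apply squeeze_zero' ?_ ?_ h1
      · filter_upwards with R; positivity
      · filter_upwards [decay α hc] with R hR
        exact mul_le_mul_of_nonneg_right hR (abs_nonneg _)
  have := hB
  have hlim : Tendsto (fun R => (∫ u in (0:ℝ)..R, gg α τ x ((u:ℂ))) +
        Complex.I • (∫ t in (0:ℝ)..δ, gg α τ x ((R:ℂ) + (t:ℂ) * Complex.I)) -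
        Complex.I • ∫ t in (0:ℝ)..δ, gg α τ x ((t:ℂ) * Complex.I)) atTop
      (nhds ((∫ u in Ioi (0:ℝ), gg α τ x ((u:ℂ))) + 0 -
        Complex.I • ∫ t in (0:ℝ)..δ, gg α τ x ((t:ℂ) * Complex.I))) :=
    (hA.add hV).sub tendsto_const_nhds
  have h2 := tendsto_nhds_unique (hB.congr (fun R => key R)) hlim
  rw [h2, add_zero]

end
section
variable {α τ x δ : ℝ}

lemma gg_real (α τ x t : ℝ) :
    gg α τ x ((t:ℂ) * Complex.I) =
      ((Real.exp (-(x * Real.cos t)) * Real.cos (α * t) * Real.exp (-(τ * t)) : ℝ) : ℂ) := by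
  unfold gg
  have h1 : Complex.cosh ((t:ℂ) * Complex.I) = ((Real.cos t : ℝ) : ℂ) := by
    rw [Complex.cosh_mul_I, Complex.ofReal_cos]
  have h2 : Complex.cosh ((α:ℂ) * ((t:ℂ) * Complex.I)) = ((Real.cos (α * t) : ℝ) : ℂ) := by
    rw [show (α:ℂ) * ((t:ℂ) * Complex.I) = ((α * t : ℝ) : ℂ) * Complex.I by push_cast; ring,
      Complex.cosh_mul_I, Complex.ofReal_cos]
  have h3 : (τ:ℂ) * ((t:ℂ) * Complex.I) * Complex.I = ((-(τ * t) : ℝ) : ℂ) := by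
    rw [mul_assoc, mul_assoc, Complex.I_mul_I]; push_cast; ring
  rw [h1, h2, h3]
  rw [show -(x:ℂ) * ((Real.cos t : ℝ) : ℂ) = ((-(x * Real.cos t) : ℝ) : ℂ) by push_cast; ring]
  rw [← Complex.ofReal_exp, ← Complex.ofReal_exp]
  push_cast
  ring

lemma gg_re (α τ x u : ℝ) :
    (gg α τ x ((u:ℂ))).re =
      Real.exp (-(x * Real.cosh u)) * Real.cosh (α * u) * Real.cos (τ * u) := by
  unfold gg
  have h1 : Complex.exp (-(x:ℂ) * Complex.cosh ((u:ℂ))) * Complex.cosh ((α:ℂ) * (u:ℂ)) =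
      ((Real.exp (-(x * Real.cosh u)) * Real.cosh (α * u) : ℝ) : ℂ) := by
    rw [← Complex.ofReal_cosh, show -(x:ℂ) * ((Real.cosh u : ℝ) : ℂ) =
      ((-(x * Real.cosh u) : ℝ) : ℂ) by push_cast; ring, ← Complex.ofReal_exp]
    rw [Complex.ofReal_mul, Complex.ofReal_cosh]
    push_cast
    ring
  have h2 : (τ:ℂ) * (u:ℂ) * Complex.I = ((τ * u : ℝ) : ℂ) * Complex.I := by push_cast; ring
  rw [h1, h2, Complex.re_ofReal_mul, Complex.exp_ofReal_mul_I_re]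

lemma ReK_eq (hx : 0 < x) (hτ : 0 ≤ τ) (hδ0 : 0 ≤ δ) (hδ2 : δ < Real.pi / 2) :
    ReK α τ x = (∫ u in Ioi (0:ℝ), gg α τ x ((u:ℂ) + (δ:ℂ) * Complex.I)).re := by
  rw [contour hx hτ hδ0 hδ2]
  have hC : (Complex.I • ∫ t in (0:ℝ)..δ, gg α τ x ((t:ℂ) * Complex.I)).re = 0 := by
    rw [intervalIntegral.integral_congr (g := fun t : ℝ =>
      ((Real.exp (-(x * Real.cos t)) * Real.cos (α * t) * Real.exp (-(τ * t)) : ℝ) : ℂ))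
      (fun t _ => gg_real α τ x t)]
    rw [intervalIntegral.integral_ofReal]
    simp
  rw [Complex.sub_re, hC, sub_zero]
  have hint := gg_int0 (α := α) (τ := τ) hx hτ hδ0 hδ2
  have := Complex.reCLM.integral_comp_comm hint
  simp only [Complex.reCLM_apply] at this
  rw [← this]
  unfold ReK
  congr 1
  funext u
  exact (gg_re α τ x u).symm

lemma ReK_bound (hx : 0 < x) (hτ : 0 ≤ τ) (hδ0 : 0 ≤ δ) (hδ2 : δ < Real.pi / 2) :
    |ReK α τ x| ≤ Real.exp (-(τ * δ)) * Kreal α (x * Real.cos δ) := by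
  rw [ReK_eq hx hτ hδ0 hδ2]
  have hc : 0 < x * Real.cos δ := mul_pos hx (cos_pos_of hδ0 hδ2)
  calc |(∫ u in Ioi (0:ℝ), gg α τ x ((u:ℂ) + (δ:ℂ) * Complex.I)).re|
      ≤ ‖∫ u in Ioi (0:ℝ), gg α τ x ((u:ℂ) + (δ:ℂ) * Complex.I)‖ :=
        Complex.abs_re_le_norm _
    _ ≤ ∫ u in Ioi (0:ℝ), ‖gg α τ x ((u:ℂ) + (δ:ℂ) * Complex.I)‖ :=
        norm_integral_le_integral_norm _
    _ ≤ ∫ u in Ioi (0:ℝ), Real.exp (-(x * Real.cos δ * Real.cosh u)) * Real.cosh (α * u) *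
          Real.exp (-(τ * δ)) := by
        apply integral_mono ((gg_int' hx hτ hδ0 hδ2 ⟨hδ0, le_refl δ⟩).norm)
          ((Kint α hc).mul_const _)
        intro u
        exact norm_gg_le α τ x u δ hτ hδ0
    _ = Real.exp (-(τ * δ)) * Kreal α (x * Real.cos δ) := by
        rw [integral_mul_const]
        unfold Kreal
        ring

end

lemma exp_int_val {b : ℝ} (hb : 0 < b) : ∫ x in Ioi (0:ℝ), Real.exp (-(b * x)) = b⁻¹ := by
  have h := integral_comp_mul_left_Ioi (fun y => Real.exp (-y)) 0 hb
  simp only [mul_zero, integral_exp_neg_Ioi, neg_zero, Real.exp_zero, smul_eq_mul,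
    mul_one] at h
  exact h

section
variable {α δ : ℝ}

lemma Kexp_integrable (hα : |α| < 1) (hδ0 : 0 ≤ δ) (hδ2 : δ < Real.pi / 2) :
    IntegrableOn (fun x : ℝ => Real.exp (-x) * Kreal α (x * Real.cos δ)) (Ioi 0) := by
  set c := Real.cos δ with hcdef
  have hc : 0 < c := cos_pos_of hδ0 hδ2
  set μ := volume.restrict (Ioi (0:ℝ)) with hμ
  set F : ℝ × ℝ → ℝ := fun p =>
    Real.exp (-p.2) * (Real.exp (-(p.2 * c * Real.cosh p.1)) * Real.cosh (α * p.1)) with hF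
  have hFcont : Continuous F := by fun_prop
  have hFmeas : AEStronglyMeasurable F (μ.prod μ) := hFcont.aestronglyMeasurable
  have key : ∀ u : ℝ, (fun x => F (u, x)) =
      fun x => Real.cosh (α * u) * Real.exp (-((1 + c * Real.cosh u) * x)) := by
    intro u; funext x
    simp only [hF]
    rw [← mul_assoc, ← Real.exp_add]
    ring_nf
  have hb : ∀ u : ℝ, 0 < 1 + c * Real.cosh u := fun u => by
    have := Real.cosh_pos (x := u); positivity
  have cond1 : ∀ᵐ u ∂μ, Integrable (fun x => F (u, x)) μ := by
    filter_upwards with u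
    rw [key u]
    exact ((exp_neg_integrableOn_Ioi 0 (hb u)).congr_fun
      (fun x _ => by rw [neg_mul]) measurableSet_Ioi).const_mul _
  have hval : ∀ u : ℝ, (∫ x, ‖F (u, x)‖ ∂μ) =
      Real.cosh (α * u) * (1 + c * Real.cosh u)⁻¹ := by
    intro u
    have hnn : ∀ x : ℝ, ‖F (u, x)‖ = F (u, x) := by
      intro x
      apply abs_of_nonneg
      simp only [hF]
      positivity
    simp_rw [hnn]
    rw [show (fun x => F (u, x)) = _ from key u, hμ]
    rw [integral_const_mul, exp_int_val (hb u)]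
  have cond2 : Integrable (fun u => ∫ x, ‖F (u, x)‖ ∂μ) μ := by
    simp_rw [hval]
    rw [hμ]
    apply integrable_of_isBigO_exp_neg (b := 1 - |α|) (by linarith)
    · have : ∀ u : ℝ, (1 + c * Real.cosh u) ≠ 0 := fun u => (hb u).ne'
      fun_prop (disch := intro u; exact (hb u).ne')
    · rw [isBigO_iff]
      refine ⟨2 / c, ?_⟩
      filter_upwards [eventually_ge_atTop (0:ℝ)] with u hu
      have h1 : Real.cosh (α * u) ≤ Real.exp (|α| * u) := by
        calc Real.cosh (α * u) ≤ Real.exp |α * u| := cosh_le_exp_abs _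
          _ = Real.exp (|α| * u) := by rw [abs_mul, abs_of_nonneg hu]
      have h2 : Real.exp u / 2 ≤ Real.cosh u := by
        rw [Real.cosh_eq]; have := Real.exp_pos (-u); linarith
      have h3 : c * (Real.exp u / 2) ≤ 1 + c * Real.cosh u := by nlinarith
      have h4 : (1 + c * Real.cosh u)⁻¹ ≤ (c * (Real.exp u / 2))⁻¹ := by
        apply inv_anti₀ (by positivity) h3
      have hnn : 0 ≤ Real.cosh (α * u) * (1 + c * Real.cosh u)⁻¹ := by
        have := (Real.cosh_pos (x := α * u)).le
        have := (hb u).le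
        positivity
      rw [Real.norm_eq_abs, abs_of_nonneg hnn, Real.norm_eq_abs, Real.abs_exp]
      calc Real.cosh (α * u) * (1 + c * Real.cosh u)⁻¹
          ≤ Real.exp (|α| * u) * (c * (Real.exp u / 2))⁻¹ := by
            apply mul_le_mul h1 h4 (by positivity) (by positivity)
        _ = 2 / c * Real.exp (|α| * u - u) := by
            rw [Real.exp_sub]
            field_simp
        _ = 2 / c * Real.exp (-(1 - |α|) * u) := by
            congr 2
            ring
  have hF_int : Integrable F (μ.prod μ) :=
    (integrable_prod_iff hFmeas).2 ⟨cond1, cond2⟩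
  have := hF_int.integral_prod_right
  rw [hμ] at this
  apply this.congr
  filter_upwards with x
  simp only [hF]
  rw [← hμ, integral_const_mul]
  unfold Kreal
  rw [hμ]

end
lemma ReK_meas (α τ : ℝ) : Measurable fun x => ReK α τ x := by
  have : (fun x => ReK α τ x) = fun x => ∫ u, (fun p : ℝ × ℝ =>
      Real.exp (-(p.1 * Real.cosh p.2)) * Real.cosh (α * p.2) * Real.cos (τ * p.2)) (x, u)
      ∂(volume.restrict (Ioi 0)) := rfl
  rw [this]
  have hcont : Continuous (fun p : ℝ × ℝ =>
      Real.exp (-(p.1 * Real.cosh p.2)) * Real.cosh (α * p.2) * Real.cos (τ * p.2)) := by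
    fun_prop
  exact (hcont.stronglyMeasurable).integral_prod_right'.measurable

/-- for `|α| < 1`, `δ ∈ [0, π/2)` and a complex sequence `(a_n)` with
`∑ |a_n| e^{-δn} < ∞`, the function `f(x) = ∑ a_n Re K_{α+in}(x)` satisfies
`∫_0^∞ e^{-x}|f(x)| dx ≤ (∑ |a_n| e^{-δn}) ∫_0^∞ e^{-x} K_α(x cos δ) dx < ∞`. -/
theorem estimate_discrete_LS (α δ : ℝ) (hα : |α| < 1) (hδ : δ ∈ Set.Ico 0 (Real.pi / 2))
    (a : ℕ → ℂ) (ha : Summable (fun n : ℕ => ‖a n‖ * Real.exp (-(δ * n))))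
    (f : ℝ → ℂ) (hf : ∀ x > (0:ℝ), f x = ∑' n : ℕ, a n * (ReK α n x : ℂ)) :
    IntegrableOn (fun x : ℝ => Real.exp (-x) * ‖f x‖) (Set.Ioi 0) ∧
    IntegrableOn (fun x : ℝ => Real.exp (-x) * Kreal α (x * Real.cos δ)) (Set.Ioi 0) ∧
    (∫ x in Set.Ioi (0:ℝ), Real.exp (-x) * ‖f x‖) ≤
      (∑' n : ℕ, ‖a n‖ * Real.exp (-(δ * n))) *
        ∫ x in Set.Ioi (0:ℝ), Real.exp (-x) * Kreal α (x * Real.cos δ) := by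
  obtain ⟨hδ0, hδ2⟩ := hδ
  have hc : 0 < Real.cos δ := cos_pos_of hδ0 hδ2
  set S := ∑' n : ℕ, ‖a n‖ * Real.exp (-(δ * n)) with hS
  have hS0 : 0 ≤ S := tsum_nonneg (fun n => by positivity)
  have hK2 : IntegrableOn (fun x : ℝ => Real.exp (-x) * Kreal α (x * Real.cos δ)) (Ioi 0) :=
    Kexp_integrable hα hδ0 hδ2
  have hKnn : ∀ x : ℝ, 0 ≤ Kreal α (x * Real.cos δ) := by
    intro x
    unfold Kreal
    apply integral_nonneg
    intro u
    have := (Real.cosh_pos (x := α * u)).le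
    positivity
  have hterm : ∀ x : ℝ, 0 < x → ∀ n : ℕ, ‖a n * (ReK α n x : ℂ)‖ ≤
      (‖a n‖ * Real.exp (-(δ * n))) * Kreal α (x * Real.cos δ) := by
    intro x hx n
    rw [norm_mul, Complex.norm_real, Real.norm_eq_abs]
    have hb := ReK_bound (α := α) (τ := (n:ℝ)) (x := x) (δ := δ) hx (Nat.cast_nonneg n) hδ0 hδ2
    calc ‖a n‖ * |ReK α (↑n) x| ≤
        ‖a n‖ * (Real.exp (-(↑n * δ)) * Kreal α (x * Real.cos δ)) :=
          mul_le_mul_of_nonneg_left hb (norm_nonneg _)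
      _ = (‖a n‖ * Real.exp (-(δ * n))) * Kreal α (x * Real.cos δ) := by
          rw [mul_comm (n:ℝ) δ]; ring
  have hsum : ∀ x : ℝ, 0 < x → Summable (fun n : ℕ => ‖a n * (ReK α n x : ℂ)‖) := by
    intro x hx
    exact Summable.of_nonneg_of_le (fun n => norm_nonneg _) (hterm x hx)
      (ha.mul_right _)
  have hbound : ∀ x : ℝ, 0 < x → ‖f x‖ ≤ S * Kreal α (x * Real.cos δ) := by
    intro x hx
    rw [hf x hx]
    calc ‖∑' n : ℕ, a n * (ReK α n x : ℂ)‖ ≤ ∑' n : ℕ, ‖a n * (ReK α n x : ℂ)‖ :=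
        norm_tsum_le_tsum_norm (hsum x hx)
      _ ≤ ∑' n : ℕ, (‖a n‖ * Real.exp (-(δ * n))) * Kreal α (x * Real.cos δ) :=
        Summable.tsum_le_tsum (hterm x hx) (hsum x hx) (ha.mul_right _)
      _ = S * Kreal α (x * Real.cos δ) := tsum_mul_right
  have hmeasF : AEStronglyMeasurable (fun x => Real.exp (-x) * ‖f x‖)
      (volume.restrict (Ioi (0:ℝ))) := by
    have h0 : AEStronglyMeasurable f (volume.restrict (Ioi (0:ℝ))) := by
      apply aestronglyMeasurable_of_tendsto_ae (f := fun N x =>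
        ∑ n ∈ Finset.range N, a n * (ReK α n x : ℂ)) atTop
      · intro N
        apply Finset.aestronglyMeasurable_fun_sum
        intro n _
        exact ((Complex.measurable_ofReal.comp (ReK_meas α n)).const_mul
          (a n)).aestronglyMeasurable
      · rw [ae_restrict_iff' measurableSet_Ioi]
        filter_upwards with x hx
        rw [hf x hx]
        exact ((Summable.of_norm (hsum x hx)).hasSum).tendsto_sum_nat
    exact ((measurable_neg.exp).aestronglyMeasurable.mul h0.norm)
  have haebound : ∀ᵐ x ∂(volume.restrict (Ioi (0:ℝ))),
      ‖Real.exp (-x) * ‖f x‖‖ ≤ S * (Real.exp (-x) * Kreal α (x * Real.cos δ)) := by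
    rw [ae_restrict_iff' measurableSet_Ioi]
    filter_upwards with x hx
    rw [Real.norm_eq_abs, abs_of_nonneg (by positivity)]
    calc Real.exp (-x) * ‖f x‖ ≤ Real.exp (-x) * (S * Kreal α (x * Real.cos δ)) :=
        mul_le_mul_of_nonneg_left (hbound x hx) (Real.exp_pos _).le
      _ = S * (Real.exp (-x) * Kreal α (x * Real.cos δ)) := by ring
  have hint1 : IntegrableOn (fun x : ℝ => Real.exp (-x) * ‖f x‖) (Ioi 0) :=
    Integrable.mono' (hK2.const_mul S) hmeasF haebound
  refine ⟨hint1, hK2, ?_⟩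
  calc (∫ x in Ioi (0:ℝ), Real.exp (-x) * ‖f x‖)
      ≤ ∫ x in Ioi (0:ℝ), S * (Real.exp (-x) * Kreal α (x * Real.cos δ)) := by
        apply setIntegral_mono_on hint1 (hK2.const_mul S) measurableSet_Ioi
        intro x hx
        calc Real.exp (-x) * ‖f x‖ ≤ Real.exp (-x) * (S * Kreal α (x * Real.cos δ)) :=
            mul_le_mul_of_nonneg_left (hbound x hx) (Real.exp_pos _).le
          _ = S * (Real.exp (-x) * Kreal α (x * Real.cos δ)) := by ring
    _ = S * ∫ x in Ioi (0:ℝ), Real.exp (-x) * Kreal α (x * Real.cos δ) := integral_const_mul _ _
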